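/- Let f : ℝⁿ → ℝ be differentiable and convex along coordinates (for every x ∈ ℝⁿ and every block i the map d ↦ f(x + Uᵢd) is convex), and suppose there are constants Lᵢ > 0 such that f(x + Uᵢh) − f(x) − ⟨Uᵢᵀ∇f(x), h⟩ ≤ (Lᵢ/2)‖h‖² for all x ∈ ℝⁿ, h ∈ ℝ^{nᵢ} and all i. Then for all x ∈ ℝⁿ, h ∈ ℝ^{nᵢ} and all i the gradient of f is block coordinate-wise Lipschitz: ‖Uᵢᵀ(∇f(x + Uᵢh) − ∇f(x))‖ ≤ Lᵢ‖h‖. -/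

import Mathlib

noncomputable section
open scoped RealInnerProductSpace

/-- `blockProj b i x` models `Uᵢ Uᵢᵀ x`: the vector of `ℝⁿ` keeping the coordinates of
block `i` (as given by the block assignment `b : Fin n → Fin N`) and zeroing the others.
A vector `h` of the block subspace `ℝ^{nᵢ}` (i.e. `Uᵢ h`) is modeled as a vector with
`blockProj b i h = h`; then `‖Uᵢᵀ y‖ = ‖blockProj b i y‖` and `⟨Uᵢᵀ y, h⟩ = ⟪y, h⟫`. -/
def blockProj {n N : ℕ} (b : Fin n → Fin N) (i : Fin N) (x : EuclideanSpace ℝ (Fin n)) :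
    EuclideanSpace ℝ (Fin n) :=
  (EuclideanSpace.equiv (Fin n) ℝ).symm (fun j => if b j = i then x j else 0)

namespace BlockAux

variable {n N : ℕ} (b : Fin n → Fin N) (i : Fin N)

lemma bp_apply (x : EuclideanSpace ℝ (Fin n)) (j : Fin n) :
    blockProj b i x j = if b j = i then x j else 0 := rfl

lemma bp_sub (u v : EuclideanSpace ℝ (Fin n)) :
    blockProj b i (u - v) = blockProj b i u - blockProj b i v := by
  ext j
  simp only [bp_apply, PiLp.sub_apply]
  split <;> simp

lemma bp_smul (c : ℝ) (u : EuclideanSpace ℝ (Fin n)) :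
    blockProj b i (c • u) = c • blockProj b i u := by
  ext j
  simp only [bp_apply, PiLp.smul_apply, smul_eq_mul]
  split <;> simp

lemma bp_zero : blockProj b i (0 : EuclideanSpace ℝ (Fin n)) = 0 := by
  ext j; simp [bp_apply]

lemma bp_idem (y : EuclideanSpace ℝ (Fin n)) :
    blockProj b i (blockProj b i y) = blockProj b i y := by
  ext j; simp only [bp_apply]; split <;> simp_all

lemma bp_inner (y w : EuclideanSpace ℝ (Fin n)) (hw : blockProj b i w = w) :
    ⟪y, w⟫ = ⟪blockProj b i y, w⟫ := by
  simp only [PiLp.inner_apply, RCLike.inner_apply, conj_trivial]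
  refine Finset.sum_congr rfl fun j _ => ?_
  rw [bp_apply]
  split
  · rfl
  · rename_i hj
    have : w j = 0 := by
      conv_lhs => rw [← hw]
      simp [bp_apply, hj]
    simp [this]

/-- convexity gradient inequality on a convex set for a differentiable function -/
lemma grad_ineq {n : ℕ} (f : EuclideanSpace ℝ (Fin n) → ℝ) (hdiff : Differentiable ℝ f)
    (s : Set (EuclideanSpace ℝ (Fin n))) (x : EuclideanSpace ℝ (Fin n))
    (hconv : ConvexOn ℝ s (fun d => f (x + d)))
    {u v : EuclideanSpace ℝ (Fin n)} (hu : u ∈ s) (hv : v ∈ s) :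
    f (x + u) + ⟪gradient f (x + u), v - u⟫ ≤ f (x + v) := by
  set g : ℝ → ℝ := fun t => f (x + u + t • (v - u)) with hg
  have h1 : HasDerivAt (fun t : ℝ => t • (v - u)) (v - u) 0 := by
    simpa using (hasDerivAt_id (0 : ℝ)).smul_const (v - u)
  have hcurve : HasDerivAt (fun t : ℝ => x + u + t • (v - u)) (v - u) 0 :=
    h1.const_add (x + u)
  have hfd : HasFDerivAt f (InnerProductSpace.toDual ℝ _ (gradient f (x + u)))
      (x + u + (0 : ℝ) • (v - u)) := by
    simpa using ((hdiff (x + u)).hasGradientAt).hasFDerivAt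
  have h2 : HasDerivAt g ⟪gradient f (x + u), v - u⟫ 0 := by
    exact hfd.comp_hasDerivAt 0 hcurve
  have key : ∀ t ∈ Set.Ioc (0 : ℝ) 1, slope g 0 t ≤ f (x + v) - f (x + u) := by
    intro t ht
    have hmem := hconv.2 hu hv (by linarith [ht.2] : (0 : ℝ) ≤ 1 - t) ht.1.le (by ring)
    have heq : x + u + t • (v - u) = x + ((1 - t) • u + t • v) := by module
    have hg0 : g 0 = f (x + u) := by simp [hg]
    have hgt : g t ≤ (1 - t) * f (x + u) + t * f (x + v) := by
      rw [hg]; simp only [heq]; exact hmem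
    rw [slope_def_field, sub_zero, div_le_iff₀ ht.1, hg0]
    nlinarith [hgt]
  have hsub : Set.Ioi (0 : ℝ) ⊆ {(0 : ℝ)}ᶜ := fun t ht => ne_of_gt ht
  have htend : Filter.Tendsto (slope g 0) (nhdsWithin 0 (Set.Ioi 0))
      (nhds ⟪gradient f (x + u), v - u⟫) :=
    (hasDerivAt_iff_tendsto_slope.mp h2).mono_left (nhdsWithin_mono _ hsub)
  have hev : ∀ᶠ t in nhdsWithin (0 : ℝ) (Set.Ioi 0),
      slope g 0 t ≤ f (x + v) - f (x + u) :=
    Filter.eventually_of_mem (Ioc_mem_nhdsGT_of_mem (by norm_num : (0:ℝ) ∈ Set.Ico (0:ℝ) 1)) key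
  have := le_of_tendsto htend hev
  linarith

end BlockAux

open BlockAux in
/-- if `f` is differentiable, convex along coordinates, and satisfies the
blockwise descent inequality with constants `Lᵢ > 0`, then the gradient of `f` is block
coordinate-wise Lipschitz: `‖Uᵢᵀ(∇f(x+Uᵢh) − ∇f(x))‖ ≤ Lᵢ‖h‖`. -/
theorem coordinatewise_lipschitz_gradient (n N : ℕ) (b : Fin n → Fin N)
    (f : EuclideanSpace ℝ (Fin n) → ℝ) (L : Fin N → ℝ)
    (hdiff : Differentiable ℝ f)
    (hconv : ∀ (x : EuclideanSpace ℝ (Fin n)) (i : Fin N),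
      ConvexOn ℝ {d : EuclideanSpace ℝ (Fin n) | blockProj b i d = d} (fun d => f (x + d)))
    (hL : ∀ i, 0 < L i)
    (hdescent : ∀ (x h : EuclideanSpace ℝ (Fin n)) (i : Fin N), blockProj b i h = h →
      f (x + h) - f x - ⟪gradient f x, h⟫ ≤ L i / 2 * ‖h‖ ^ 2) :
    ∀ (x h : EuclideanSpace ℝ (Fin n)) (i : Fin N), blockProj b i h = h →
      ‖blockProj b i (gradient f (x + h) - gradient f x)‖ ≤ L i * ‖h‖ := by
  intro x h i hh
  have hLi := hL i
  have hsub : ∀ u v, blockProj b i u = u → blockProj b i v = v →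
      blockProj b i (u - v) = u - v := by
    intro u v hu hv; rw [bp_sub, hu, hv]
  have hsmul : ∀ (c : ℝ) u, blockProj b i u = u → blockProj b i (c • u) = c • u := by
    intro c u hu; rw [bp_smul, hu]
  -- gradient inequality from convexity
  have hA : ∀ u v, blockProj b i u = u → blockProj b i v = v →
      f (x + u) + ⟪gradient f (x + u), v - u⟫ ≤ f (x + v) := by
    intro u v hu hv
    exact grad_ineq f hdiff _ x (hconv x i) hu hv
  -- descent inequality rewritten
  have hB : ∀ u v, blockProj b i u = u → blockProj b i v = v →
      f (x + v) ≤ f (x + u) + ⟪gradient f (x + u), v - u⟫ + L i / 2 * ‖v - u‖ ^ 2 := by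
    intro u v hu hv
    have := hdescent (x + u) (v - u) i (hsub v u hv hu)
    have heq : x + u + (v - u) = x + v := by abel
    rw [heq] at this
    linarith
  -- lower quadratic bound
  have hC : ∀ u v, blockProj b i u = u → blockProj b i v = v →
      f (x + u) + ⟪gradient f (x + u), v - u⟫
        + (2 * L i)⁻¹ * ‖blockProj b i (gradient f (x + v))
            - blockProj b i (gradient f (x + u))‖ ^ 2 ≤ f (x + v) := by
    intro u v hu hv
    set gu := gradient f (x + u) with hgu
    set gv := gradient f (x + v) with hgv
    set D := blockProj b i gv - blockProj b i gu with hDdef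
    have hD : blockProj b i D = D := hsub _ _ (bp_idem b i gv) (bp_idem b i gu)
    set w := v - (L i)⁻¹ • D with hwdef
    have hw : blockProj b i w = w := hsub _ _ hv (hsmul _ _ hD)
    have h1 := hB v w hv hw
    have h2 := hA u w hu hw
    have hwv : w - v = -((L i)⁻¹ • D) := by rw [hwdef]; abel
    have hwu : w - u = (v - u) - (L i)⁻¹ • D := by rw [hwdef]; abel
    have e1 : ⟪gv, w - v⟫ = -((L i)⁻¹ * ⟪blockProj b i gv, D⟫) := by
      rw [hwv, inner_neg_right, real_inner_smul_right, bp_inner b i gv D hD]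
    have e2 : ⟪gu, w - u⟫ = ⟪gu, v - u⟫ - (L i)⁻¹ * ⟪blockProj b i gu, D⟫ := by
      rw [hwu, inner_sub_right, real_inner_smul_right, bp_inner b i gu D hD]
    have e3 : ‖w - v‖ ^ 2 = (L i)⁻¹ ^ 2 * ‖D‖ ^ 2 := by
      rw [hwv, norm_neg, norm_smul]
      rw [Real.norm_eq_abs, abs_of_nonneg (inv_nonneg.mpr hLi.le)]
      ring
    have e4 : (L i)⁻¹ * ⟪blockProj b i gv, D⟫ - (L i)⁻¹ * ⟪blockProj b i gu, D⟫
        = (L i)⁻¹ * ‖D‖ ^ 2 := by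
      rw [← mul_sub, ← inner_sub_left, ← hDdef, real_inner_self_eq_norm_sq]
    rw [e1, e3] at h1
    rw [e2] at h2
    have hfs : (L i)⁻¹ * ‖D‖ ^ 2 - L i / 2 * ((L i)⁻¹ ^ 2 * ‖D‖ ^ 2)
        = (2 * L i)⁻¹ * ‖D‖ ^ 2 := by
      field_simp
      ring
    linarith [h1, h2, e4, hfs]
  have h0 : blockProj b i (0 : EuclideanSpace ℝ (Fin n)) = 0 := bp_zero b i
  have hc1 := hC 0 h h0 hh
  have hc2 := hC h 0 hh h0
  simp only [add_zero, sub_zero, zero_sub, inner_neg_right] at hc1 hc2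
  set g0 := gradient f x with hg0
  set g1 := gradient f (x + h) with hg1
  have hDeq : blockProj b i (g1 - g0) = blockProj b i g1 - blockProj b i g0 := bp_sub b i g1 g0
  set D := blockProj b i g1 - blockProj b i g0 with hD
  have hrev : ‖blockProj b i g0 - blockProj b i g1‖ = ‖D‖ := by rw [hD, norm_sub_rev]
  rw [hrev] at hc2
  have hi0 : ⟪g0, h⟫ = ⟪blockProj b i g0, h⟫ := bp_inner b i g0 h hh
  have hi1 : ⟪g1, h⟫ = ⟪blockProj b i g1, h⟫ := bp_inner b i g1 h hh
  have hDh : ⟪blockProj b i g1, h⟫ - ⟪blockProj b i g0, h⟫ = ⟪D, h⟫ := by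
    rw [← inner_sub_left, ← hD]
  have hcs : ⟪D, h⟫ ≤ ‖D‖ * ‖h‖ := real_inner_le_norm D h
  have hkey : (L i)⁻¹ * ‖D‖ ^ 2 ≤ ‖D‖ * ‖h‖ := by
    have h2L : (2 * L i)⁻¹ * ‖D‖ ^ 2 + (2 * L i)⁻¹ * ‖D‖ ^ 2 = (L i)⁻¹ * ‖D‖ ^ 2 := by
      field_simp; ring
    linarith [hc1, hc2, hi0, hi1, hDh, hcs, h2L]
  rw [hDeq]
  rcases eq_or_lt_of_le (norm_nonneg D) with hD0 | hD0
  · rw [← hD0]; positivity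
  · have hsq : ‖D‖ * ‖D‖ ≤ ‖D‖ * (L i * ‖h‖) := by
      have := mul_le_mul_of_nonneg_left hkey hLi.le
      have hL1 : L i * ((L i)⁻¹ * ‖D‖ ^ 2) = ‖D‖ ^ 2 := by field_simp
      nlinarith [this]
    exact (mul_le_mul_iff_right₀ hD0).mp hsq
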